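/- For any graph G on n vertices, the number of nonempty sets of the form N[F] for F a fort of G is at most 2ⁿ minus the total number of power dominating sets of G, i.e., |𝒩(G)| ≤ 2ⁿ − 𝒫(G;1), where 𝒫(G;1) = Σᵢ p(G;i). -/

import Mathlib

open Finset Polynomial

/-- A set `T` is closed under the zero forcing rule: whenever `v ∈ T` has exactly one
neighbor outside `T`, that neighbor is in `T`. -/
def SimpleGraph.ForceClosed {V : Type*} (G : SimpleGraph V) (T : Set V) : Prop :=
  ∀ v ∈ T, ∀ w : V, G.neighborSet v \ T = {w} → w ∈ T

/-- `S` is a zero forcing set: starting from `S` and applying the forcing rule repeatedly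
colors every vertex, i.e. every force-closed superset of `S` is everything. -/
def SimpleGraph.IsZeroForcingSet {V : Type*} (G : SimpleGraph V) (S : Set V) : Prop :=
  ∀ T : Set V, S ⊆ T → G.ForceClosed T → T = Set.univ

/-- The closed neighborhood `N[S]` of a set of vertices. -/
def SimpleGraph.closedNbhd {V : Type*} (G : SimpleGraph V) (S : Set V) : Set V :=
  S ∪ {v | ∃ u ∈ S, G.Adj u v}

/-- `S` is a power dominating set: first color `N[S]` (domination step), then the
forcing process colors every vertex. -/
def SimpleGraph.IsPowerDomSet {V : Type*} (G : SimpleGraph V) (S : Set V) : Prop :=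
  G.IsZeroForcingSet (G.closedNbhd S)

/-- `S` is a dominating set. -/
def SimpleGraph.IsDomSet {V : Type*} (G : SimpleGraph V) (S : Set V) : Prop :=
  G.closedNbhd S = Set.univ

/-- `p(G;i)`: the number of power dominating sets of `G` of cardinality `i`. -/
noncomputable def pdCount {V : Type*} [Fintype V] (G : SimpleGraph V) (i : ℕ) : ℕ :=
  Nat.card {S : Finset V // G.IsPowerDomSet ↑S ∧ S.card = i}

/-- The power domination polynomial `𝒫(G;x) = ∑_{i=1}^n p(G;i) xⁱ`. -/
noncomputable def pdPoly {V : Type*} [Fintype V] (G : SimpleGraph V) : Polynomial ℤ :=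
  ∑ i ∈ Finset.Icc 1 (Fintype.card V), Polynomial.C (pdCount G i : ℤ) * Polynomial.X ^ i

/-- A fort: a nonempty set `F` such that no vertex outside `F` has exactly one neighbor in `F`. -/
def SimpleGraph.IsFort {V : Type*} (G : SimpleGraph V) (F : Set V) : Prop :=
  F.Nonempty ∧ ∀ v ∉ F, ¬ ∃ w : V, G.neighborSet v ∩ F = {w}


/-- Key lemma: the complement of the closed neighborhood of a fort is never
power dominating. -/
lemma fort_compl_not_pd {V : Type*} (G : SimpleGraph V) {F : Set V}
    (hF : G.IsFort F) : ¬ G.IsPowerDomSet (G.closedNbhd F)ᶜ := by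
  intro h
  obtain ⟨hne, hfort⟩ := hF
  have hsub : G.closedNbhd (G.closedNbhd F)ᶜ ⊆ Fᶜ := by
    rintro v (hv | ⟨u, hu, huv⟩)
    · intro hvF
      exact hv (Or.inl hvF)
    · intro hvF
      exact hu (Or.inr ⟨v, hvF, huv.symm⟩)
  have hfc : G.ForceClosed Fᶜ := by
    intro v hv w hw
    exfalso
    apply hfort v hv
    refine ⟨w, ?_⟩
    rw [← hw]
    ext x
    simp [Set.mem_diff]
  have := h Fᶜ hsub hfc
  obtain ⟨x, hx⟩ := hne
  have : x ∈ (Fᶜ : Set V) := this ▸ Set.mem_univ x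
  exact this hx

theorem stmt6 {V : Type*} [Fintype V] (G : SimpleGraph V) :
    Nat.card {N : Set V // ∃ F : Set V, G.IsFort F ∧ N = G.closedNbhd F} ≤
      2 ^ (Fintype.card V) - ∑ i ∈ Finset.Icc 1 (Fintype.card V), pdCount G i := by
  classical
  set n := Fintype.card V with hn
  set A : Finset (Finset V) := univ.filter (fun S => G.IsPowerDomSet ↑S) with hA
  set B : Finset (Finset V) := univ.filter (fun S => ¬ G.IsPowerDomSet ↑S) with hB
  have hAB : A.card + B.card = 2 ^ n := by
    rw [hA, hB, Finset.card_filter_add_card_filter_not]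
    simp [Fintype.card_finset, hn]
  -- the sum is at most A.card
  have hsum : ∑ i ∈ Finset.Icc 1 n, pdCount G i ≤ A.card := by
    have hpd : ∀ i, pdCount G i =
        (univ.filter (fun S : Finset V => G.IsPowerDomSet ↑S ∧ S.card = i)).card := by
      intro i
      rw [pdCount, Nat.card_eq_fintype_card, Fintype.card_subtype]
    calc ∑ i ∈ Finset.Icc 1 n, pdCount G i
        = ((Finset.Icc 1 n).biUnion
            (fun i => univ.filter (fun S : Finset V => G.IsPowerDomSet ↑S ∧ S.card = i))).card := by
          rw [Finset.card_biUnion]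
          · exact Finset.sum_congr rfl fun i _ => hpd i
          · intro i _ j _ hij
            simp only [Finset.disjoint_left, Finset.mem_filter]
            rintro S ⟨-, -, h1⟩ ⟨-, -, h2⟩
            exact hij (h1 ▸ h2)
      _ ≤ A.card := by
          apply Finset.card_le_card
          intro S hS
          simp only [Finset.mem_biUnion, Finset.mem_filter] at hS
          obtain ⟨i, -, -, hSpd, -⟩ := hS
          simp [hA, hSpd]
  -- LHS ≤ B.card
  have hL : Nat.card {N : Set V // ∃ F : Set V, G.IsFort F ∧ N = G.closedNbhd F} ≤ B.card := by
    rw [Nat.card_eq_fintype_card, Fintype.card_subtype]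
    apply Finset.card_le_card_of_injOn (fun N => Nᶜ.toFinset)
    · intro N hN
      simp only [Finset.mem_coe, Finset.mem_filter, Finset.mem_univ, true_and] at hN ⊢
      obtain ⟨F, hF, rfl⟩ := hN
      rw [hB]
      simp only [Finset.mem_filter, Finset.mem_univ, true_and, Set.coe_toFinset]
      exact fort_compl_not_pd G hF
    · intro N1 _ N2 _ h
      have : (N1ᶜ : Set V) = N2ᶜ := by
        rwa [← Set.toFinset_inj]
      exact compl_injective this
  omega
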